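/- Let $0 < a \le b$, let $N \ge 1$, and suppose for each $i = 1,\dots,N$ we have values $c_i \in \mathbb{R}$ and $q_i > 0$ such that $\exp(-c_i)/q_i \in [a,b]$. Then $\log\left(\frac{1}{N}\sum_{i=1}^N \frac{\exp(-c_i)}{q_i}\right) \le \frac{1}{N}\sum_{i=1}^N \left(-c_i - \log q_i\right) - K$, where $K = \log(a) + \log(b) - 2\log\left(\frac{a+b}{2}\right)$. -/

import Mathlib

open Finset Real

private lemma log_concave_pts {u v p : ℝ} (hu : 0 < u) (hv : 0 < v)
    (hp0 : 0 ≤ p) (hp1 : p ≤ 1) :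
    p * Real.log u + (1 - p) * Real.log v ≤ Real.log (p * u + (1 - p) * v) := by
  have h := strictConcaveOn_log_Ioi.concaveOn.2 (Set.mem_Ioi.2 hu) (Set.mem_Ioi.2 hv)
    hp0 (show (0:ℝ) ≤ 1 - p by linarith) (show p + (1 - p) = 1 by ring)
  simpa [smul_eq_mul] using h

private lemma chord_le_log {a b x : ℝ} (ha : 0 < a) (hab : a < b)
    (hx1 : a ≤ x) (hx2 : x ≤ b) :
    ((b - x) * Real.log a + (x - a) * Real.log b) / (b - a) ≤ Real.log x := by
  have hba : (0 : ℝ) < b - a := by linarith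
  have hb : (0 : ℝ) < b := lt_trans ha hab
  have key := log_concave_pts (p := (b - x) / (b - a)) ha hb
    (div_nonneg (by linarith) hba.le) (by rw [div_le_one hba]; linarith)
  have hxeq : (b - x) / (b - a) * a + (1 - (b - x) / (b - a)) * b = x := by
    field_simp; ring
  rw [hxeq] at key
  have e : (b - x) / (b - a) * Real.log a + (1 - (b - x) / (b - a)) * Real.log b
      = ((b - x) * Real.log a + (x - a) * Real.log b) / (b - a)
        + (1 - (b - x) / (b - a) - (x - a) / (b - a)) * Real.log b := by
    ring
  have hz : 1 - (b - x) / (b - a) - (x - a) / (b - a) = 0 := by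
    field_simp; ring
  rw [e, hz] at key
  linarith

private lemma log_le_chord_add {a b x : ℝ} (ha : 0 < a) (hab : a < b)
    (hx1 : a ≤ x) (hx2 : x ≤ b) :
    Real.log x ≤ ((b - x) * Real.log a + (x - a) * Real.log b) / (b - a)
      + (2 * Real.log ((a + b) / 2) - Real.log a - Real.log b) := by
  have hba : (0 : ℝ) < b - a := by linarith
  have hb : (0 : ℝ) < b := lt_trans ha hab
  have hx0 : (0 : ℝ) < x := lt_of_lt_of_le ha hx1
  have hJ := chord_le_log ha hab hx1 hx2
  rw [div_le_iff₀ hba] at hJ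
  -- hJ : (b - x) * log a + (x - a) * log b ≤ log x * (b - a)
  rcases le_total x ((a + b) / 2) with hxm | hxm
  · -- pair x with b, weight (b-a)/(2*(b-x))
    have hbx : (0 : ℝ) < b - x := by linarith
    have key := log_concave_pts (p := (b - a) / (2 * (b - x))) hx0 hb
      (by positivity) (by rw [div_le_one (by positivity)]; linarith)
    have hmeq : (b - a) / (2 * (b - x)) * x + (1 - (b - a) / (2 * (b - x))) * b
        = (a + b) / 2 := by field_simp; ring
    rw [hmeq] at key
    have e : (b - a) / (2 * (b - x)) * Real.log x
          + (1 - (b - a) / (2 * (b - x))) * Real.log b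
        = ((b - a) * Real.log x + (2 * (b - x) - (b - a)) * Real.log b)
            / (2 * (b - x)) := by
      field_simp
    rw [e, div_le_iff₀ (by positivity)] at key
    -- key : (b-a)*log x + (2(b-x)-(b-a))*log b ≤ log((a+b)/2) * (2*(b-x))
    have key2 : (b - a) * Real.log x + (2 * (b - x) - (b - a)) * Real.log b
        ≤ 2 * (b - x) * Real.log ((a + b) / 2) := by nlinarith [key]
    have expand : (((b - x) * Real.log a + (x - a) * Real.log b) / (b - a)
        + (2 * Real.log ((a + b) / 2) - Real.log a - Real.log b) - Real.log x)
        * ((b - x) * (b - a))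
        = (b - a) * (2 * (b - x) * Real.log ((a + b) / 2)
            - ((b - a) * Real.log x + (2 * (b - x) - (b - a)) * Real.log b))
          + (x - a) * (Real.log x * (b - a)
            - ((b - x) * Real.log a + (x - a) * Real.log b)) := by
      field_simp; ring
    nlinarith [expand, mul_nonneg hba.le (sub_nonneg.2 key2),
      mul_nonneg (show (0:ℝ) ≤ x - a by linarith) (sub_nonneg.2 hJ),
      mul_pos hbx hba]
  · -- pair x with a, weight (b-a)/(2*(x-a))
    have hxa : (0 : ℝ) < x - a := by linarith
    have key := log_concave_pts (p := (b - a) / (2 * (x - a))) hx0 ha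
      (by positivity) (by rw [div_le_one (by positivity)]; linarith)
    have hmeq : (b - a) / (2 * (x - a)) * x + (1 - (b - a) / (2 * (x - a))) * a
        = (a + b) / 2 := by field_simp; ring
    rw [hmeq] at key
    have e : (b - a) / (2 * (x - a)) * Real.log x
          + (1 - (b - a) / (2 * (x - a))) * Real.log a
        = ((b - a) * Real.log x + (2 * (x - a) - (b - a)) * Real.log a)
            / (2 * (x - a)) := by
      field_simp
    rw [e, div_le_iff₀ (by positivity)] at key
    have key2 : (b - a) * Real.log x + (2 * (x - a) - (b - a)) * Real.log a
        ≤ 2 * (x - a) * Real.log ((a + b) / 2) := by nlinarith [key]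
    have expand : (((b - x) * Real.log a + (x - a) * Real.log b) / (b - a)
        + (2 * Real.log ((a + b) / 2) - Real.log a - Real.log b) - Real.log x)
        * ((x - a) * (b - a))
        = (b - a) * (2 * (x - a) * Real.log ((a + b) / 2)
            - ((b - a) * Real.log x + (2 * (x - a) - (b - a)) * Real.log a))
          + (b - x) * (Real.log x * (b - a)
            - ((b - x) * Real.log a + (x - a) * Real.log b)) := by
      field_simp; ring
    nlinarith [expand, mul_nonneg hba.le (sub_nonneg.2 key2),
      mul_nonneg (show (0:ℝ) ≤ b - x by linarith) (sub_nonneg.2 hJ),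
      mul_pos hxa hba]

theorem log_partition_upper_bound
    (a b : ℝ) (ha : 0 < a) (hab : a ≤ b) (N : ℕ) (hN : 1 ≤ N)
    (c q : Fin N → ℝ) (hq : ∀ i, 0 < q i)
    (hmem : ∀ i, Real.exp (-c i) / q i ∈ Set.Icc a b) :
    Real.log ((1 / (N : ℝ)) * ∑ i, Real.exp (-c i) / q i)
      ≤ (1 / (N : ℝ)) * ∑ i, (-c i - Real.log (q i))
          - (Real.log a + Real.log b - 2 * Real.log ((a + b) / 2)) := by
  have hb : 0 < b := lt_of_lt_of_le ha hab
  have hNpos : (0 : ℝ) < (N : ℝ) := by exact_mod_cast hN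
  set y : Fin N → ℝ := fun i => Real.exp (-c i) / q i with hy
  have hrw : ∀ i, -c i - Real.log (q i) = Real.log (y i) := by
    intro i
    rw [hy]
    rw [Real.log_div (Real.exp_ne_zero _) (hq i).ne', Real.log_exp]
  have hsumrw : ∑ i, (-c i - Real.log (q i)) = ∑ i, Real.log (y i) :=
    Finset.sum_congr rfl fun i _ => hrw i
  rw [hsumrw]
  set x : ℝ := (1 / (N : ℝ)) * ∑ i, y i with hx
  have hsa : (N : ℝ) * a ≤ ∑ i, y i := by
    have hle : ∑ _i : Fin N, a ≤ ∑ i, y i :=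
      Finset.sum_le_sum fun i _ => (hmem i).1
    simpa [Finset.sum_const, Finset.card_univ, mul_comm] using hle
  have hsb : ∑ i, y i ≤ (N : ℝ) * b := by
    have hle : ∑ i, y i ≤ ∑ _i : Fin N, b :=
      Finset.sum_le_sum fun i _ => (hmem i).2
    simpa [Finset.sum_const, Finset.card_univ, mul_comm] using hle
  have hxa : a ≤ x := by
    rw [hx]
    calc a = (1 / (N : ℝ)) * ((N : ℝ) * a) := by field_simp
      _ ≤ (1 / (N : ℝ)) * ∑ i, y i :=
        mul_le_mul_of_nonneg_left hsa (by positivity)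
  have hxb : x ≤ b := by
    rw [hx]
    calc (1 / (N : ℝ)) * ∑ i, y i ≤ (1 / (N : ℝ)) * ((N : ℝ) * b) :=
        mul_le_mul_of_nonneg_left hsb (by positivity)
      _ = b := by field_simp
  rcases eq_or_lt_of_le hab with heq | hlt
  · -- a = b : every y i = a, equality
    subst heq
    have hyi : ∀ i, y i = a := fun i => le_antisymm (hmem i).2 (hmem i).1
    have hxeq : x = a := le_antisymm hxb hxa
    rw [hxeq]
    have hsum : ∑ i, Real.log (y i) = (N : ℝ) * Real.log a := by
      rw [Finset.sum_congr rfl fun i _ => by rw [hyi i]]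
      rw [Finset.sum_const, Finset.card_univ, Fintype.card_fin, nsmul_eq_mul]
    rw [hsum]
    have h2 : (a + a) / 2 = a := by ring
    rw [h2]
    have : (1 / (N : ℝ)) * ((N : ℝ) * Real.log a) = Real.log a := by field_simp
    rw [this]
    linarith
  · -- a < b
    have hba : (0 : ℝ) < b - a := by linarith
    have hchord : ((b - x) * Real.log a + (x - a) * Real.log b) / (b - a)
        ≤ (1 / (N : ℝ)) * ∑ i, Real.log (y i) := by
      have hper : ∀ i ∈ Finset.univ,
          ((b - y i) * Real.log a + (y i - a) * Real.log b) / (b - a)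
            ≤ Real.log (y i) := fun i _ =>
        chord_le_log ha hlt (hmem i).1 (hmem i).2
      have hsum := Finset.sum_le_sum hper
      have hlhs : ∑ i, ((b - y i) * Real.log a + (y i - a) * Real.log b) / (b - a)
          = (((N : ℝ) * b - ∑ i, y i) * Real.log a
            + ((∑ i, y i) - (N : ℝ) * a) * Real.log b) / (b - a) := by
        rw [← Finset.sum_div]
        congr 1
        rw [Finset.sum_add_distrib, ← Finset.sum_mul, ← Finset.sum_mul,
          Finset.sum_sub_distrib, Finset.sum_sub_distrib]
        simp [Finset.sum_const, Finset.card_univ, mul_comm]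
      rw [hlhs] at hsum
      have hS : ∑ i, y i = (N : ℝ) * x := by rw [hx]; field_simp
      rw [hS] at hsum
      have expand : ((((N : ℝ) * b - (N : ℝ) * x) * Real.log a
            + ((N : ℝ) * x - (N : ℝ) * a) * Real.log b) / (b - a))
          = (N : ℝ) * (((b - x) * Real.log a + (x - a) * Real.log b) / (b - a)) := by
        field_simp
      rw [expand] at hsum
      calc ((b - x) * Real.log a + (x - a) * Real.log b) / (b - a)
          = (1 / (N : ℝ)) * ((N : ℝ)
            * (((b - x) * Real.log a + (x - a) * Real.log b) / (b - a))) := by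
            field_simp
        _ ≤ (1 / (N : ℝ)) * ∑ i, Real.log (y i) :=
            mul_le_mul_of_nonneg_left hsum (by positivity)
    have hmain := log_le_chord_add ha hlt hxa hxb
    calc Real.log x ≤ _ := hmain
      _ ≤ (1 / (N : ℝ)) * ∑ i, Real.log (y i)
          - (Real.log a + Real.log b - 2 * Real.log ((a + b) / 2)) := by linarith
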